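/- Let N ≥ 2 and 1 < p < N, and set m = p/(p−1) and s = N + 2 − N/p. Then the functions y ↦ (1 + |y|^m)^{−s} and y ↦ |y|^m (1 + |y|^m)^{−s} are integrable on ℝ^N, and ∫_{ℝ^N} |y|^m (1 + |y|^m)^{−s} dy = (N(p−1)/p) ∫_{ℝ^N} (1 + |y|^m)^{−s} dy. Consequently ∫_{ℝ^N} ( |y|^m − (p−1) ) (1 + |y|^m)^{−s} dy = ((N−p)(p−1)/p) ∫_{ℝ^N} (1 + |y|^m)^{−s} dy > 0. -/

import Mathlib

open MeasureTheory Real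

section PohozaevAux
open Set Filter


lemma aux_integrableOn (m s c : ℝ) (hm : 0 < m) (hs : 0 < s) (hc : -1 < c)
    (h2 : c - m * s < -1) :
    IntegrableOn (fun r : ℝ => r ^ c * (1 + r ^ m) ^ (-s)) (Ioi 0) := by
  have hcont : ContinuousOn (fun r : ℝ => r ^ c * (1 + r ^ m) ^ (-s)) (Ioi 0) := by
    apply ContinuousOn.mul
    · exact fun x hx => (Real.continuousAt_rpow_const x c (Or.inl (ne_of_gt hx))).continuousWithinAt
    · apply ContinuousOn.rpow_const
      · exact continuousOn_const.add (continuousOn_id.rpow_const (fun x _ => Or.inr hm.le))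
      · intro x hx
        have hx0 : (0:ℝ) ≤ x ^ m := Real.rpow_nonneg (le_of_lt hx) m
        exact Or.inl (by nlinarith)
  have hsplit : (Ioi (0:ℝ)) = Ioc 0 1 ∪ Ioi 1 := (Ioc_union_Ioi_eq_Ioi zero_le_one).symm
  rw [hsplit]
  apply IntegrableOn.union
  · have hint : IntegrableOn (fun r : ℝ => r ^ c) (Ioc (0:ℝ) 1) := by
      rw [integrableOn_Ioc_iff_integrableOn_Ioo]
      exact (intervalIntegral.integrableOn_Ioo_rpow_iff zero_lt_one).2 hc
    refine Integrable.mono' hint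
      ((hcont.mono Ioc_subset_Ioi_self).aestronglyMeasurable measurableSet_Ioc) ?_
    filter_upwards [self_mem_ae_restrict measurableSet_Ioc] with r hr
    have hr0 : 0 < r := hr.1
    have h1 : (1 + r ^ m) ^ (-s) ≤ 1 := by
      apply Real.rpow_le_one_of_one_le_of_nonpos
      · nlinarith [Real.rpow_nonneg hr0.le m]
      · linarith
    have hpos : (0:ℝ) ≤ r ^ c * (1 + r ^ m) ^ (-s) := by positivity
    rw [Real.norm_eq_abs, abs_of_nonneg hpos]
    calc r ^ c * (1 + r ^ m) ^ (-s) ≤ r ^ c * 1 := by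
          apply mul_le_mul_of_nonneg_left h1 (Real.rpow_nonneg hr0.le c)
      _ = r ^ c := mul_one _
  · have hint : IntegrableOn (fun r : ℝ => r ^ (c - m * s)) (Ioi (1:ℝ)) :=
      integrableOn_Ioi_rpow_of_lt h2 zero_lt_one
    refine Integrable.mono' hint
      ((hcont.mono (Ioi_subset_Ioi zero_le_one)).aestronglyMeasurable measurableSet_Ioi) ?_
    filter_upwards [self_mem_ae_restrict measurableSet_Ioi] with r hr
    have hr1 : (1:ℝ) < r := hr
    have hr0 : (0:ℝ) < r := lt_trans zero_lt_one hr1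
    have hb : (1 + r ^ m) ^ (-s) ≤ (r ^ m) ^ (-s) := by
      apply Real.rpow_le_rpow_of_nonpos (by positivity) (by linarith [Real.rpow_nonneg hr0.le m]) (by linarith)
    have hpos : (0:ℝ) ≤ r ^ c * (1 + r ^ m) ^ (-s) := by positivity
    rw [Real.norm_eq_abs, abs_of_nonneg hpos]
    calc r ^ c * (1 + r ^ m) ^ (-s) ≤ r ^ c * (r ^ m) ^ (-s) :=
          mul_le_mul_of_nonneg_left hb (Real.rpow_nonneg hr0.le c)
      _ = r ^ (c - m * s) := by
          rw [← Real.rpow_mul hr0.le, ← Real.rpow_add hr0]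
          ring_nf

lemma aux_identity (N : ℕ) (hN : 2 ≤ N) (m s : ℝ) (hm : 1 < m)
    (hms : m * s = N + 2 * m) :
    m * ∫ r in Ioi (0:ℝ), r ^ ((N:ℝ) - 1) * (r ^ m * (1 + r ^ m) ^ (-s)) =
      (N : ℝ) * ∫ r in Ioi (0:ℝ), r ^ ((N:ℝ) - 1) * (1 + r ^ m) ^ (-s) := by
  have hm0 : 0 < m := lt_trans zero_lt_one hm
  have hN2 : (2:ℝ) ≤ (N:ℝ) := by exact_mod_cast hN
  have hs2 : 2 ≤ s := by
    have : m * 2 ≤ m * s := by rw [hms]; nlinarith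
    exact le_of_mul_le_mul_left this hm0
  have he4 : m * (s - 1) = (N:ℝ) + m := by nlinarith
  set F : ℝ → ℝ := fun r => r ^ (N:ℝ) * (1 + r ^ m) ^ (-(s - 1)) with hF
  set g : ℝ → ℝ := fun r =>
    (N:ℝ) * (r ^ ((N:ℝ) - 1) * (1 + r ^ m) ^ (-s)) -
      m * (r ^ ((N:ℝ) - 1) * (r ^ m * (1 + r ^ m) ^ (-s))) with hg
  have hderiv : ∀ x ∈ Ici (0:ℝ), HasDerivAt F (g x) x := by
    intro x hx
    have hx0 : (0:ℝ) ≤ x := hx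
    have hxm : (0:ℝ) ≤ x ^ m := Real.rpow_nonneg hx0 m
    have hbase : (0:ℝ) < 1 + x ^ m := by linarith
    have h1 : HasDerivAt (fun r : ℝ => r ^ (N:ℝ)) ((N:ℝ) * x ^ ((N:ℝ) - 1)) x :=
      Real.hasDerivAt_rpow_const (Or.inr (by linarith))
    have h2 : HasDerivAt (fun r : ℝ => 1 + r ^ m) (m * x ^ (m - 1)) x := by
      simpa using (Real.hasDerivAt_rpow_const (p := m) (Or.inr hm.le)).const_add 1
    have h3 := h2.rpow_const (p := -(s - 1)) (Or.inl hbase.ne')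
    have h4 : HasDerivAt F _ x := h1.mul h3
    convert h4 using 1
    rw [show -(s - 1) - 1 = -s by ring]
    rcases eq_or_lt_of_le hx0 with h | hxpos
    · have z1 : ((N:ℝ) - 1) ≠ 0 := ne_of_gt (by linarith)
      have z2 : (N:ℝ) ≠ 0 := by positivity
      have z3 : m - 1 ≠ 0 := ne_of_gt (by linarith)
      rw [← h]
      simp [hg, Real.zero_rpow z1, Real.zero_rpow z2, Real.zero_rpow z3]
    · have e1 : (1 + x ^ m) ^ (-(s - 1)) = (1 + x ^ m) * (1 + x ^ m) ^ (-s) := by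
        rw [show -(s - 1) = 1 + -s by ring, Real.rpow_add hbase, Real.rpow_one]
      have e3 : x ^ (N:ℝ) * x ^ (m - 1) = x ^ ((N:ℝ) - 1) * x ^ m := by
        rw [← Real.rpow_add hxpos, ← Real.rpow_add hxpos]
        ring_nf
      simp only [hg, e1]
      linear_combination ((s - 1) * m * (1 + x ^ m) ^ (-s)) * e3 +
        (x ^ ((N:ℝ) - 1) * x ^ m * (1 + x ^ m) ^ (-s)) * he4

  have hs0 : 0 < s := by linarith
  have h0int : IntegrableOn (fun r : ℝ => r ^ ((N:ℝ) - 1) * (1 + r ^ m) ^ (-s)) (Ioi 0) :=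
    aux_integrableOn m s ((N:ℝ) - 1) hm0 hs0 (by linarith) (by linarith)
  have h1int : IntegrableOn
      (fun r : ℝ => r ^ ((N:ℝ) - 1) * (r ^ m * (1 + r ^ m) ^ (-s))) (Ioi 0) := by
    refine (aux_integrableOn m s ((N:ℝ) - 1 + m) hm0 hs0 (by linarith) (by linarith)).congr_fun
      ?_ measurableSet_Ioi
    intro x hx
    simp only
    rw [Real.rpow_add hx]
    ring
  have hgint : IntegrableOn g (Ioi 0) := by
    rw [hg]
    exact (h0int.const_mul _).sub (h1int.const_mul _)
  have hF0 : Tendsto F atTop (nhds 0) := by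
    apply tendsto_of_tendsto_of_tendsto_of_le_of_le' tendsto_const_nhds
      (tendsto_rpow_neg_atTop hm0)
    · filter_upwards [eventually_ge_atTop (0:ℝ)] with r hr
      have h1 : (0:ℝ) ≤ r ^ m := Real.rpow_nonneg hr m
      exact mul_nonneg (Real.rpow_nonneg hr _) (Real.rpow_nonneg (by linarith) _)
    · filter_upwards [eventually_ge_atTop (1:ℝ)] with r hr
      have hr0 : (0:ℝ) < r := lt_of_lt_of_le zero_lt_one hr
      have hrm : (0:ℝ) < r ^ m := Real.rpow_pos_of_pos hr0 m
      have hb : (1 + r ^ m) ^ (-(s - 1)) ≤ (r ^ m) ^ (-(s - 1)) :=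
        Real.rpow_le_rpow_of_nonpos hrm (by linarith) (by linarith)
      have : F r ≤ r ^ (N:ℝ) * (r ^ m) ^ (-(s - 1)) :=
        mul_le_mul_of_nonneg_left hb (Real.rpow_nonneg hr0.le _)
      refine le_trans this (le_of_eq ?_)
      rw [← Real.rpow_mul hr0.le, ← Real.rpow_add hr0]
      congr 1
      linarith
  have key := integral_Ioi_of_hasDerivAt_of_tendsto' hderiv hgint hF0
  have hF0val : F 0 = 0 := by
    have : ((N:ℝ)) ≠ 0 := ne_of_gt (by linarith)
    have hN0 : N ≠ 0 := by omega
    simp [hF, Real.zero_rpow this, hN0]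
  rw [hF0val, sub_zero] at key
  have hsplit : ∫ r in Ioi (0:ℝ), g r =
      (N:ℝ) * (∫ r in Ioi (0:ℝ), r ^ ((N:ℝ) - 1) * (1 + r ^ m) ^ (-s)) -
        m * ∫ r in Ioi (0:ℝ), r ^ ((N:ℝ) - 1) * (r ^ m * (1 + r ^ m) ^ (-s)) := by
    rw [hg, integral_sub (h0int.const_mul _) (h1int.const_mul _),
      integral_const_mul, integral_const_mul]
  rw [key] at hsplit
  linarith

lemma aux_bound (m σ t : ℝ) (hm : 0 < m) (hσ : 0 ≤ σ) (ht : 0 ≤ t) :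
    (1 + t ^ m) ^ (-σ) ≤ 2 ^ (m * σ) * (1 + t) ^ (-(m * σ)) := by
  have htm : (0:ℝ) ≤ t ^ m := Real.rpow_nonneg ht m
  have h2m : (0:ℝ) < 2 ^ m := Real.rpow_pos_of_pos two_pos m
  have key : (1 + t) ^ m ≤ 2 ^ m * (1 + t ^ m) := by
    rcases le_total t 1 with h | h
    · calc (1 + t) ^ m ≤ 2 ^ m := Real.rpow_le_rpow (by linarith) (by linarith) hm.le
        _ ≤ 2 ^ m * (1 + t ^ m) := le_mul_of_one_le_right h2m.le (by linarith)
    · calc (1 + t) ^ m ≤ (2 * t) ^ m := Real.rpow_le_rpow (by linarith) (by linarith) hm.le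
        _ = 2 ^ m * t ^ m := Real.mul_rpow (by norm_num) (by linarith)
        _ ≤ 2 ^ m * (1 + t ^ m) := by nlinarith
  have hkey2 : (2:ℝ) ^ (-m) * (1 + t) ^ m ≤ 1 + t ^ m := by
    rw [Real.rpow_neg (by norm_num : (0:ℝ) ≤ 2), inv_mul_le_iff₀ h2m]
    linarith [key]
  have hmain : (1 + t ^ m) ^ (-σ) ≤ ((2:ℝ) ^ (-m) * (1 + t) ^ m) ^ (-σ) :=
    Real.rpow_le_rpow_of_nonpos (by positivity) hkey2 (by linarith)
  refine le_trans hmain (le_of_eq ?_)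
  rw [Real.mul_rpow (by positivity) (by positivity), ← Real.rpow_mul (by norm_num : (0:ℝ) ≤ 2),
    ← Real.rpow_mul (by linarith : (0:ℝ) ≤ 1 + t)]
  ring_nf


end PohozaevAux

/-- With `m = p/(p−1)` and `s = N + 2 − N/p`, the functions `(1+|y|^m)^{−s}` and
`|y|^m (1+|y|^m)^{−s}` are integrable on `ℝ^N`, with
`∫ |y|^m (1+|y|^m)^{−s} = (N(p−1)/p) ∫ (1+|y|^m)^{−s}`; consequently
`∫ (|y|^m − (p−1)) (1+|y|^m)^{−s} = ((N−p)(p−1)/p) ∫ (1+|y|^m)^{−s} > 0`. -/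
theorem pohozaev_constant_integrals (N : ℕ) (hN : 2 ≤ N) (p : ℝ)
    (hp1 : 1 < p) (hpN : p < N) :
    let m : ℝ := p / (p - 1)
    let s : ℝ := (N : ℝ) + 2 - (N : ℝ) / p
    Integrable (fun y : EuclideanSpace ℝ (Fin N) => (1 + ‖y‖ ^ m) ^ (-s)) ∧
    Integrable (fun y : EuclideanSpace ℝ (Fin N) => ‖y‖ ^ m * (1 + ‖y‖ ^ m) ^ (-s)) ∧
    (∫ y : EuclideanSpace ℝ (Fin N), ‖y‖ ^ m * (1 + ‖y‖ ^ m) ^ (-s)) =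
      ((N : ℝ) * (p - 1) / p) *
        (∫ y : EuclideanSpace ℝ (Fin N), (1 + ‖y‖ ^ m) ^ (-s)) ∧
    (∫ y : EuclideanSpace ℝ (Fin N), (‖y‖ ^ m - (p - 1)) * (1 + ‖y‖ ^ m) ^ (-s)) =
      (((N : ℝ) - p) * (p - 1) / p) *
        (∫ y : EuclideanSpace ℝ (Fin N), (1 + ‖y‖ ^ m) ^ (-s)) ∧
    0 < ∫ y : EuclideanSpace ℝ (Fin N), (‖y‖ ^ m - (p - 1)) * (1 + ‖y‖ ^ m) ^ (-s) := by
  intro m s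
  set E := EuclideanSpace ℝ (Fin N) with hE
  have hp0 : (0:ℝ) < p := lt_trans zero_lt_one hp1
  have hp1' : (0:ℝ) < p - 1 := by linarith
  have hN2 : (2:ℝ) ≤ (N:ℝ) := by exact_mod_cast hN
  have hNp : p < (N:ℝ) := hpN
  have hm : 1 < m := (one_lt_div hp1').mpr (by linarith)
  have hm0 : 0 < m := lt_trans zero_lt_one hm
  have hms : m * s = (N:ℝ) + 2 * m := by
    show p / (p - 1) * ((N:ℝ) + 2 - (N:ℝ) / p) = (N:ℝ) + 2 * (p / (p - 1))
    field_simp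
    ring
  have hs2 : 2 ≤ s := by
    have : m * 2 ≤ m * s := by rw [hms]; nlinarith
    exact le_of_mul_le_mul_left this hm0
  have hs0 : 0 < s := by linarith
  -- continuity
  have c1 : Continuous fun y : E => ‖y‖ ^ m :=
    continuous_norm.rpow_const (fun y => Or.inr hm0.le)
  have hbpos : ∀ y : E, (0:ℝ) < 1 + ‖y‖ ^ m := by
    intro y
    have := Real.rpow_nonneg (norm_nonneg y) m
    linarith
  have f1cont : Continuous fun y : E => (1 + ‖y‖ ^ m) ^ (-s) :=
    (continuous_const.add c1).rpow_const (fun y => Or.inl (hbpos y).ne')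
  have f2cont : Continuous fun y : E => ‖y‖ ^ m * (1 + ‖y‖ ^ m) ^ (-s) := c1.mul f1cont
  -- integrability
  have hdim : (Module.finrank ℝ E : ℝ) = (N:ℝ) := by
    show (Module.finrank ℝ (EuclideanSpace ℝ (Fin N)) : ℝ) = (N:ℝ)
    rw [finrank_euclideanSpace_fin]
  have hint1 : Integrable (fun y : E => (1 + ‖y‖ ^ m) ^ (-s)) := by
    have hbig : (Module.finrank ℝ E : ℝ) < m * s := by rw [hdim, hms]; linarith
    refine Integrable.mono' ((integrable_one_add_norm hbig).const_mul ((2:ℝ) ^ (m * s)))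
      f1cont.aestronglyMeasurable (Filter.Eventually.of_forall fun y => ?_)
    rw [Real.norm_eq_abs, abs_of_nonneg (Real.rpow_nonneg (hbpos y).le _)]
    exact aux_bound m s ‖y‖ hm0 hs0.le (norm_nonneg y)
  have hint2 : Integrable (fun y : E => ‖y‖ ^ m * (1 + ‖y‖ ^ m) ^ (-s)) := by
    have hbig : (Module.finrank ℝ E : ℝ) < m * (s - 1) := by
      rw [hdim]
      nlinarith
    refine Integrable.mono'
      ((integrable_one_add_norm hbig).const_mul ((2:ℝ) ^ (m * (s - 1))))
      f2cont.aestronglyMeasurable (Filter.Eventually.of_forall fun y => ?_)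
    have h1 : (0:ℝ) ≤ ‖y‖ ^ m := Real.rpow_nonneg (norm_nonneg y) m
    have h2 : (0:ℝ) ≤ (1 + ‖y‖ ^ m) ^ (-s) := Real.rpow_nonneg (hbpos y).le _
    rw [Real.norm_eq_abs, abs_of_nonneg (mul_nonneg h1 h2)]
    have step1 : ‖y‖ ^ m * (1 + ‖y‖ ^ m) ^ (-s) ≤ (1 + ‖y‖ ^ m) ^ (-(s - 1)) := by
      rw [show -(s - 1) = 1 + -s by ring, Real.rpow_add (hbpos y), Real.rpow_one]
      exact mul_le_mul_of_nonneg_right (by linarith) h2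
    exact le_trans step1 (aux_bound m (s - 1) ‖y‖ hm0 (by linarith) (norm_nonneg y))
  -- radial reduction
  haveI : Nonempty (Fin N) := ⟨⟨0, by omega⟩⟩
  haveI : Nontrivial E := by infer_instance
  have hdimN : Module.finrank ℝ E = N := by
    show Module.finrank ℝ (EuclideanSpace ℝ (Fin N)) = N
    exact finrank_euclideanSpace_fin
  have conv : ∀ f : ℝ → ℝ,
      (∫ r in Set.Ioi (0:ℝ), r ^ (Module.finrank ℝ E - 1) • f r) =
        ∫ r in Set.Ioi (0:ℝ), r ^ ((N:ℝ) - 1) * f r := by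
    intro f
    apply MeasureTheory.setIntegral_congr_fun measurableSet_Ioi
    intro x hx
    simp only [smul_eq_mul]
    congr 1
    rw [← Real.rpow_natCast x (Module.finrank ℝ E - 1), hdimN,
      Nat.cast_sub (by omega : 1 ≤ N), Nat.cast_one]
  have I1 := MeasureTheory.integral_fun_norm_addHaar (volume : Measure E)
    (fun r => (1 + r ^ m) ^ (-s))
  have I2 := MeasureTheory.integral_fun_norm_addHaar (volume : Measure E)
    (fun r => r ^ m * (1 + r ^ m) ^ (-s))
  rw [conv, nsmul_eq_mul, smul_eq_mul, hdimN] at I1 I2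
  set c := (volume (Metric.ball (0:E) 1)).toReal with hc
  set J0 := ∫ r in Set.Ioi (0:ℝ), r ^ ((N:ℝ) - 1) * (1 + r ^ m) ^ (-s) with hJ0
  set J1 := ∫ r in Set.Ioi (0:ℝ), r ^ ((N:ℝ) - 1) * (r ^ m * (1 + r ^ m) ^ (-s)) with hJ1
  have hid : m * J1 = (N:ℝ) * J0 := aux_identity N hN m s hm hms
  have hratio : (N:ℝ) * (p - 1) / p = (N:ℝ) / m := by
    show (N:ℝ) * (p - 1) / p = (N:ℝ) / (p / (p - 1))
    field_simp
  have g3 : (∫ y : E, ‖y‖ ^ m * (1 + ‖y‖ ^ m) ^ (-s)) =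
      ((N : ℝ) * (p - 1) / p) * ∫ y : E, (1 + ‖y‖ ^ m) ^ (-s) := by
    rw [I1, I2, hratio, div_mul_eq_mul_div, eq_div_iff hm0.ne']
    linear_combination ((N:ℝ) * volume.real (Metric.ball (0:E) 1)) * hid
  have g4 : (∫ y : E, (‖y‖ ^ m - (p - 1)) * (1 + ‖y‖ ^ m) ^ (-s)) =
      (((N : ℝ) - p) * (p - 1) / p) * ∫ y : E, (1 + ‖y‖ ^ m) ^ (-s) := by
    have hsub : (fun y : E => (‖y‖ ^ m - (p - 1)) * (1 + ‖y‖ ^ m) ^ (-s)) =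
        fun y : E => ‖y‖ ^ m * (1 + ‖y‖ ^ m) ^ (-s) - (p - 1) * (1 + ‖y‖ ^ m) ^ (-s) := by
      funext y
      ring
    rw [hsub, MeasureTheory.integral_sub hint2 (hint1.const_mul _), integral_const_mul, g3]
    field_simp
  have hIpos : 0 < ∫ y : E, (1 + ‖y‖ ^ m) ^ (-s) := by
    rw [MeasureTheory.integral_pos_iff_support_of_nonneg
      (fun y => (Real.rpow_pos_of_pos (hbpos y) (-s)).le) hint1]
    have hsupp : Function.support (fun y : E => (1 + ‖y‖ ^ m) ^ (-s)) = Set.univ :=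
      Set.eq_univ_of_forall fun y => (Real.rpow_pos_of_pos (hbpos y) (-s)).ne'
    rw [hsupp]
    exact isOpen_univ.measure_pos volume Set.univ_nonempty
  have g5 : 0 < ∫ y : E, (‖y‖ ^ m - (p - 1)) * (1 + ‖y‖ ^ m) ^ (-s) := by
    rw [g4]
    exact mul_pos (div_pos (mul_pos (by linarith) hp1') hp0) hIpos
  exact ⟨hint1, hint2, g3, g4, g5⟩
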